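/- If G is a bipartite simple graph of order n, then the Mostar index of G satisfies Mo(G) ≤ (√3/18)·n³. -/

import Mathlib

/-- `nG G u v` is the number of vertices of `G` whose distance to `u` is strictly
smaller than their distance to `v` (vertices at infinite distance to both `u` and `v`
are counted for neither, since the extended distance `⊤` is not `< ⊤`). -/
noncomputable def nG {V : Type*} [Fintype V] (G : SimpleGraph V) (u v : V) : ℕ :=
  Set.ncard {w : V | G.edist w u < G.edist w v}

/-- The Mostar index `Mo(G) = ∑_{uv ∈ E(G)} |nG(u,v) - nG(v,u)|` of a finite simple graph. -/
noncomputable def mostar {V : Type*} [Fintype V] (G : SimpleGraph V) : ℤ :=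
  ∑ e ∈ (Set.toFinite G.edgeSet).toFinset,
    Sym2.lift ⟨fun u v => |(nG G u v : ℤ) - (nG G v u : ℤ)|, fun _ _ => abs_sub_comm _ _⟩ e

section Aux

open Finset SimpleGraph

private lemma mostar_cubic_ineq (N q : ℝ) (hq : 0 ≤ q) (hqN : q ≤ N) :
    18 * q * (N - q) * (N - 2*q) ≤ Real.sqrt 3 * N ^ 3 := by
  set s := Real.sqrt 3 with hs
  have hs2 : s ^ 2 = 3 := Real.sq_sqrt (by norm_num)
  have hs0 : 0 ≤ s := Real.sqrt_nonneg 3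
  have hs3 : s ^ 3 = 3 * s := by rw [pow_succ, hs2]
  have hN0 : 0 ≤ N := le_trans hq hqN
  have h32 : 3 ≤ 2 * s := by nlinarith
  have hNq : 0 ≤ (3 + 2*s)*N - 6*q := by nlinarith
  have hprod : 0 ≤ (6*q - (3-s)*N)^2 * ((3 + 2*s)*N - 6*q) :=
    mul_nonneg (sq_nonneg _) hNq
  have hid : 6*(s*N^3 - 18*q*(N-q)*(N-2*q)) = (6*q-(3-s)*N)^2*((3+2*s)*N-6*q) := by
    linear_combination (9*N^3 - 18*N^2*q) * hs2 - 2*N^3 * hs3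
  linarith

private lemma mostar_key_ineq (N p q : ℝ) (hp : 1 ≤ p) (hq : 1 ≤ q) (hpq : p + q ≤ N) :
    N - 2*q ≤ Real.sqrt 3 / 18 * N ^ 2 * (1/p + 1/q) := by
  set s := Real.sqrt 3 with hs
  have hs2 : s ^ 2 = 3 := Real.sq_sqrt (by norm_num)
  have hs0 : 0 ≤ s := Real.sqrt_nonneg 3
  have hp0 : 0 < p := by linarith
  have hq0 : 0 < q := by linarith
  have hN : 2 ≤ N := by linarith
  have hrw : s / 18 * N ^ 2 * (1/p + 1/q) = s * N^2 * (p + q) / (18 * (p * q)) := by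
    field_simp; ring
  rw [hrw, le_div_iff₀ (by positivity)]
  rcases le_or_gt (18 * q * (N - 2*q)) (s * N^2) with hA | hB
  · rcases le_or_gt (N - 2*q) 0 with hneg | hpos
    · nlinarith [mul_pos hp0 hq0,
        mul_nonneg (mul_nonneg hs0 (sq_nonneg N)) (by linarith : (0:ℝ) ≤ p + q),
        mul_nonneg (mul_nonneg (le_of_lt hp0) (le_of_lt hq0)) (by linarith : (0:ℝ) ≤ 2*q - N)]
    · nlinarith [mul_le_mul_of_nonneg_left hA (le_of_lt hp0),
        mul_nonneg (mul_nonneg hs0 (sq_nonneg N)) (le_of_lt hq0)]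
  · have hcub := mostar_cubic_ineq N q (by linarith) (by linarith)
    have hslope : 0 ≤ 18 * q * (N - 2*q) - s * N^2 := by linarith
    have hgap : 0 ≤ N - q - p := by linarith
    nlinarith [mul_nonneg hslope hgap]

variable {V : Type*} [Fintype V] {G : SimpleGraph V}

omit [Fintype V] in
private lemma mostar_no_triangle (hbip : G.Colorable 2) {u v w : V}
    (h1 : G.Adj u v) (h2 : G.Adj u w) (h3 : G.Adj v w) : False := by
  obtain ⟨c⟩ := hbip
  have e1 : (c u).val ≠ (c v).val := fun h => c.valid h1 (Fin.ext h)
  have e2 : (c u).val ≠ (c w).val := fun h => c.valid h2 (Fin.ext h)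
  have e3 : (c v).val ≠ (c w).val := fun h => c.valid h3 (Fin.ext h)
  have := (c u).isLt; have := (c v).isLt; have := (c w).isLt
  omega

private lemma mostar_nG_add_le (u v : V) : nG G u v + nG G v u ≤ Fintype.card V := by
  have hdisj : Disjoint {w : V | G.edist w u < G.edist w v}
      {w : V | G.edist w v < G.edist w u} := by
    rw [Set.disjoint_left]
    intro w h1 h2
    simp only [Set.mem_setOf_eq] at h1 h2
    exact lt_asymm h1 h2
  calc nG G u v + nG G v u
      = ({w : V | G.edist w u < G.edist w v} ∪ {w : V | G.edist w v < G.edist w u}).ncard := by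
        unfold nG
        rw [Set.ncard_union_eq hdisj (Set.toFinite _) (Set.toFinite _)]
    _ ≤ (Set.univ : Set V).ncard := Set.ncard_le_ncard (Set.subset_univ _) (Set.toFinite _)
    _ = Fintype.card V := by rw [Set.ncard_univ, Nat.card_eq_fintype_card]

private lemma mostar_degree_le_nG [DecidableRel G.Adj] (hbip : G.Colorable 2) {u v : V}
    (huv : G.Adj u v) : G.degree u ≤ nG G u v := by
  classical
  set S : Finset V := insert u ((G.neighborFinset u).erase v) with hS
  have hvmem : v ∈ G.neighborFinset u := (mem_neighborFinset _ _ _).mpr huv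
  have hcard : S.card = G.degree u := by
    rw [hS, card_insert_of_notMem (by simp), card_erase_of_mem hvmem]
    have h1 : 0 < G.degree u := card_pos.mpr ⟨v, hvmem⟩
    have h2 : G.degree u = #(G.neighborFinset u) := rfl
    omega
  have hsub : (S : Set V) ⊆ {w : V | G.edist w u < G.edist w v} := by
    intro w hw
    simp only [hS, coe_insert, Set.mem_insert_iff, coe_erase, Set.mem_diff,
      mem_coe, mem_neighborFinset, Set.mem_singleton_iff] at hw
    simp only [Set.mem_setOf_eq]
    rcases hw with rfl | ⟨hadj, hne⟩
    · rw [SimpleGraph.edist_self, SimpleGraph.edist_eq_one_iff_adj.mpr huv]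
      exact zero_lt_one
    · have h1 : G.edist w u = 1 := SimpleGraph.edist_eq_one_iff_adj.mpr (hadj.symm)
      have hnadj : ¬ G.Adj w v := fun h => mostar_no_triangle hbip huv hadj h.symm
      have hne0 : G.edist w v ≠ 0 := by
        simp only [ne_eq, SimpleGraph.edist_eq_zero_iff]; exact hne
      have hne1 : G.edist w v ≠ 1 := by
        simp only [ne_eq, SimpleGraph.edist_eq_one_iff_adj]; exact hnadj
      rw [h1]
      exact lt_of_le_of_ne (Order.one_le_iff_pos.mpr (pos_iff_ne_zero.mpr hne0)) (Ne.symm hne1)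
  calc G.degree u = S.card := hcard.symm
    _ = (S : Set V).ncard := (Set.ncard_coe_finset S).symm
    _ ≤ _ := Set.ncard_le_ncard hsub (Set.toFinite _)

private lemma mostar_degree_add_le [DecidableRel G.Adj] (hbip : G.Colorable 2) {u v : V}
    (huv : G.Adj u v) : G.degree u + G.degree v ≤ Fintype.card V := by
  classical
  have hdisj : Disjoint (G.neighborFinset u) (G.neighborFinset v) := by
    rw [Finset.disjoint_left]
    intro w hwu hwv
    exact mostar_no_triangle hbip huv ((mem_neighborFinset _ _ _).mp hwu)
      ((mem_neighborFinset _ _ _).mp hwv)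
  calc G.degree u + G.degree v = (G.neighborFinset u ∪ G.neighborFinset v).card :=
        (card_union_of_disjoint hdisj).symm
    _ ≤ (univ : Finset V).card := card_le_card (subset_univ _)
    _ = Fintype.card V := rfl

/-- The per-edge bound. -/
private lemma mostar_edge_bound [DecidableRel G.Adj] (hbip : G.Colorable 2) {u v : V}
    (huv : G.Adj u v) :
    |(nG G u v : ℝ) - (nG G v u : ℝ)| ≤ Real.sqrt 3 / 18 * (Fintype.card V : ℝ) ^ 2 *
      (1/(G.degree u : ℝ) + 1/(G.degree v : ℝ)) := by
  have hp1 : (1 : ℝ) ≤ (G.degree u : ℝ) := by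
    exact_mod_cast card_pos.mpr ⟨v, (mem_neighborFinset _ _ _).mpr huv⟩
  have hq1 : (1 : ℝ) ≤ (G.degree v : ℝ) := by
    exact_mod_cast card_pos.mpr ⟨u, (mem_neighborFinset _ _ _).mpr huv.symm⟩
  have hab : (nG G u v : ℝ) + (nG G v u : ℝ) ≤ (Fintype.card V : ℝ) := by
    exact_mod_cast mostar_nG_add_le u v
  have hpa : (G.degree u : ℝ) ≤ (nG G u v : ℝ) := by
    exact_mod_cast mostar_degree_le_nG hbip huv
  have hqb : (G.degree v : ℝ) ≤ (nG G v u : ℝ) := by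
    exact_mod_cast mostar_degree_le_nG hbip huv.symm
  have hpq : (G.degree u : ℝ) + (G.degree v : ℝ) ≤ (Fintype.card V : ℝ) := by
    exact_mod_cast mostar_degree_add_le hbip huv
  rw [abs_sub_le_iff]
  constructor
  · have h1 := mostar_key_ineq (Fintype.card V : ℝ) (G.degree u : ℝ) (G.degree v : ℝ)
      hp1 hq1 hpq
    linarith
  · have h2 := mostar_key_ineq (Fintype.card V : ℝ) (G.degree v : ℝ) (G.degree u : ℝ)
      hq1 hp1 (by linarith)
    have : 1/(G.degree v : ℝ) + 1/(G.degree u : ℝ)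
        = 1/(G.degree u : ℝ) + 1/(G.degree v : ℝ) := add_comm _ _
    rw [this] at h2
    linarith

private lemma mostar_dart_sum_eq [DecidableEq V] [DecidableRel G.Adj]
    (f : { f : V → V → ℝ // ∀ a₁ a₂, f a₁ a₂ = f a₂ a₁ }) :
    ∑ d : G.Dart, f.1 d.fst d.snd = 2 * ∑ e ∈ G.edgeFinset, Sym2.lift f e := by
  rw [← Finset.sum_fiberwise_of_maps_to (g := SimpleGraph.Dart.edge)
    (t := G.edgeFinset) (fun d _ => by rw [mem_edgeFinset]; exact d.edge_mem)
    (fun d => f.1 d.fst d.snd), Finset.mul_sum]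
  refine Finset.sum_congr rfl (fun e he => ?_)
  induction e with
  | _ u v =>
    have hadj : G.Adj u v := by rwa [mem_edgeFinset, mem_edgeSet] at he
    have hfib : (univ.filter (fun d : G.Dart => d.edge = s(u, v)))
        = {(⟨(u, v), hadj⟩ : G.Dart), (⟨(u, v), hadj⟩ : G.Dart).symm} := by
      have := SimpleGraph.Dart.edge_fiber (⟨(u, v), hadj⟩ : G.Dart)
      convert this using 2
      exact Iff.rfl
    rw [hfib, Finset.sum_pair (Ne.symm (SimpleGraph.Dart.symm_ne _))]
    simp only [Sym2.lift_mk]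
    have : f.1 v u = f.1 u v := f.2 v u
    simp [SimpleGraph.Dart.symm, this]
    ring

private lemma mostar_sum_inv_deg_le [DecidableEq V] [DecidableRel G.Adj] :
    ∑ e ∈ G.edgeFinset,
      Sym2.lift ⟨fun u v => 1/(G.degree u : ℝ) + 1/(G.degree v : ℝ),
        fun _ _ => add_comm _ _⟩ e ≤ (Fintype.card V : ℝ) := by
  set f : { f : V → V → ℝ // ∀ a₁ a₂, f a₁ a₂ = f a₂ a₁ } :=
    ⟨fun u v => 1/(G.degree u : ℝ) + 1/(G.degree v : ℝ), fun _ _ => add_comm _ _⟩ with hf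
  have hdart := mostar_dart_sum_eq (G := G) f
  have hsplit : ∑ d : G.Dart, f.1 d.fst d.snd
      = ∑ d : G.Dart, 1/(G.degree d.fst : ℝ) + ∑ d : G.Dart, 1/(G.degree d.snd : ℝ) := by
    rw [← Finset.sum_add_distrib]
  have hswap : ∑ d : G.Dart, 1/(G.degree d.snd : ℝ) = ∑ d : G.Dart, 1/(G.degree d.fst : ℝ) := by
    exact Fintype.sum_equiv (SimpleGraph.Dart.symm_involutive (G := G)).toPerm
      _ _ (fun d => rfl)
  have hfst : ∑ d : G.Dart, 1/(G.degree d.fst : ℝ) ≤ (Fintype.card V : ℝ) := by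
    rw [← Finset.sum_fiberwise_of_maps_to (g := fun d : G.Dart => d.fst)
      (t := univ) (fun d _ => mem_univ _) (fun d => 1/(G.degree d.fst : ℝ))]
    calc ∑ v : V, ∑ d ∈ univ.filter (fun d : G.Dart => d.fst = v), 1/(G.degree d.fst : ℝ)
        = ∑ v : V, (G.degree v : ℝ) * (1/(G.degree v : ℝ)) := by
          refine Finset.sum_congr rfl (fun v _ => ?_)
          rw [Finset.sum_congr rfl (fun d hd => by rw [(mem_filter.mp hd).2])]
          rw [Finset.sum_const, nsmul_eq_mul]
          congr 1
          exact_mod_cast G.dart_fst_fiber_card_eq_degree v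
      _ ≤ ∑ _v : V, (1 : ℝ) := by
          refine Finset.sum_le_sum (fun v _ => ?_)
          rcases Nat.eq_zero_or_pos (G.degree v) with h | h
          · simp [h]
          · rw [mul_one_div, div_self (by positivity)]
      _ = (Fintype.card V : ℝ) := by simp
  rw [hf] at hdart
  linarith [hdart, hsplit, hswap, hfst]

end Aux

/-- If `G` is a bipartite simple graph of order `n`, then `Mo(G) ≤ (√3/18)·n³`. -/
theorem mostar_bipartite_le {V : Type*} [Fintype V] (G : SimpleGraph V) (n : ℕ)
    (hn : Fintype.card V = n) (hbip : G.Colorable 2) :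
    (mostar G : ℝ) ≤ (Real.sqrt 3 / 18) * (n : ℝ) ^ 3 := by
  classical
  open Finset SimpleGraph in
  subst hn
  set N : ℝ := (Fintype.card V : ℝ) with hN
  have hN0 : 0 ≤ N := by positivity
  have hC : 0 ≤ Real.sqrt 3 / 18 * N ^ 2 := by positivity
  have hfin : (Set.toFinite G.edgeSet).toFinset = G.edgeFinset := by
    ext e
    simp only [Set.Finite.mem_toFinset, mem_edgeFinset]
  set f : { f : V → V → ℝ // ∀ a₁ a₂, f a₁ a₂ = f a₂ a₁ } :=
    ⟨fun u v => 1/(G.degree u : ℝ) + 1/(G.degree v : ℝ), fun _ _ => add_comm _ _⟩ with hf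
  have hcast : (mostar G : ℝ)
      = ∑ e ∈ G.edgeFinset,
          ((Sym2.lift ⟨fun u v => |(nG G u v : ℤ) - (nG G v u : ℤ)|,
            fun _ _ => abs_sub_comm _ _⟩ e : ℤ) : ℝ) := by
    rw [mostar, hfin]
    push_cast
    rfl
  rw [hcast]
  have hstep : ∀ e ∈ G.edgeFinset,
      ((Sym2.lift ⟨fun u v => |(nG G u v : ℤ) - (nG G v u : ℤ)|,
        fun _ _ => abs_sub_comm _ _⟩ e : ℤ) : ℝ)
      ≤ Real.sqrt 3 / 18 * N ^ 2 * Sym2.lift f e := by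
    intro e he
    induction e with
    | _ u v =>
      have hadj : G.Adj u v := by rwa [mem_edgeFinset, mem_edgeSet] at he
      simp only [Sym2.lift_mk, hf]
      have := mostar_edge_bound hbip hadj
      calc ((|(nG G u v : ℤ) - (nG G v u : ℤ)| : ℤ) : ℝ)
          = |(nG G u v : ℝ) - (nG G v u : ℝ)| := by push_cast; rfl
        _ ≤ _ := this
  calc (∑ e ∈ G.edgeFinset, ((Sym2.lift ⟨fun u v => |(nG G u v : ℤ) - (nG G v u : ℤ)|,
          fun _ _ => abs_sub_comm _ _⟩ e : ℤ) : ℝ))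
      ≤ ∑ e ∈ G.edgeFinset, Real.sqrt 3 / 18 * N ^ 2 * Sym2.lift f e :=
        Finset.sum_le_sum hstep
    _ = Real.sqrt 3 / 18 * N ^ 2 * ∑ e ∈ G.edgeFinset, Sym2.lift f e := by
        rw [Finset.mul_sum]
    _ ≤ Real.sqrt 3 / 18 * N ^ 2 * N := by
        refine mul_le_mul_of_nonneg_left ?_ hC
        exact mostar_sum_inv_deg_le
    _ = Real.sqrt 3 / 18 * N ^ 3 := by ring
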